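/- The overlap graph Ov(k) admits an Eulerian circuit, i.e., a closed directed walk using every edge exactly once. -/

import Mathlib

open Filter Finset
/-- The pattern of a tuple of distinct values: the unique permutation in the same
relative order. -/
def patOf {j : ℕ} (f : Fin j → ℕ) : Equiv.Perm (Fin j) := (Tuple.sort f)⁻¹

/-- The pattern induced by the first `k` entries of a permutation of size `k+1`.
In the overlap graph `Ov(k+1)` this is the source of the edge labeled `π`. -/
def firstPat {k : ℕ} (π : Equiv.Perm (Fin (k + 1))) : Equiv.Perm (Fin k) :=
  patOf (fun i => (π i.castSucc : ℕ))

/-- The pattern induced by the last `k` entries of a permutation of size `k+1`.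
In the overlap graph `Ov(k+1)` this is the target of the edge labeled `π`. -/
def lastPat {k : ℕ} (π : Equiv.Perm (Fin (k + 1))) : Equiv.Perm (Fin k) :=
  patOf (fun i => (π i.succ : ℕ))

section AbstractEuler

variable {E V : Type*} [DecidableEq E] [DecidableEq V] [Fintype E]
variable (s t : E → V)

/-- Flow-counting for a trail: in-degree + start indicator = out-degree + end indicator. -/
theorem trail_count (v : V) : ∀ (w : List E), w.Chain' (fun a b => t a = s b) →
    ∀ f g : E, w.head? = some f → w.getLast? = some g →
    w.countP (fun e => decide (t e = v)) + (if s f = v then 1 else 0)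
      = w.countP (fun e => decide (s e = v)) + (if t g = v then 1 else 0)
  | [], _, f, g, hf, hg => by simp at hf
  | [e], _, f, g, hf, hg => by
      simp only [List.head?_cons, Option.some_inj] at hf
      simp only [List.getLast?_singleton, Option.some_inj] at hg
      subst hf; subst hg
      simp only [List.countP_cons, List.countP_nil]
      split_ifs <;> simp_all
  | e :: e' :: w', hc, f, g, hf, hg => by
      simp only [List.head?_cons, Option.some_inj] at hf
      subst hf
      unfold List.Chain' at hc; rw [List.isChain_cons_cons] at hc
      have hg' : (e' :: w').getLast? = some g := by
        rwa [show e :: e' :: w' = [e] ++ e' :: w' from rfl,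
          List.getLast?_append_of_ne_nil _ (by simp)] at hg
      have ih := trail_count v (e' :: w') hc.2 e' g rfl hg'
      have hse : t e = s e' := hc.1
      simp only [List.countP_cons, decide_eq_true_eq] at ih ⊢
      rw [hse]
      split_ifs at ih ⊢ <;> omega

theorem closed_count {v0 : V} {w : List E} (hc : w.Chain' (fun a b => t a = s b))
    (hh : w.head?.map s = some v0) (hl : w.getLast?.map t = some v0) (v : V) :
    w.countP (fun e => decide (t e = v)) = w.countP (fun e => decide (s e = v)) := by
  obtain ⟨f, hf, hsf⟩ : ∃ f, w.head? = some f ∧ s f = v0 := by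
    cases hw : w.head? with
    | none => rw [hw] at hh; simp at hh
    | some f => rw [hw] at hh; exact ⟨f, rfl, by simpa using hh⟩
  obtain ⟨g, hg, htg⟩ : ∃ g, w.getLast? = some g ∧ t g = v0 := by
    cases hw : w.getLast? with
    | none => rw [hw] at hl; simp at hl
    | some g => rw [hw] at hl; exact ⟨g, rfl, by simpa using hl⟩
  have := trail_count s t v w hc f g hf hg
  rw [hsf, htg] at this
  split_ifs at this <;> omega

theorem count_eq_card_filter {w : List E} (hnd : w.Nodup) (p : E → Bool) :
    w.countP p = (w.toFinset.filter (p ·)).card := by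
  rw [← List.toFinset_filter, List.toFinset_card_of_nodup (hnd.filter p),
    List.countP_eq_length_filter]

variable {s t}

/-- A non-extendable trail within a balanced edge set is closed. -/
theorem max_trail_closed {F : Finset E}
    (hbal : ∀ v : V, (F.filter fun e => s e = v).card = (F.filter fun e => t e = v).card)
    {w : List E} {v : V} (hne : w ≠ [])
    (hc : w.Chain' (fun a b => t a = s b)) (hnd : w.Nodup) (hF : ∀ e ∈ w, e ∈ F)
    (hh : w.head?.map s = some v)
    (hmax : ∀ e ∈ F, e ∉ w → ¬ w.getLast?.map t = some (s e)) :
    w.getLast?.map t = some v := by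
  obtain ⟨g, hg⟩ : ∃ g, w.getLast? = some g := by
    cases hw : w.getLast? with
    | none => exact absurd (List.getLast?_eq_none_iff.1 hw) hne
    | some g => exact ⟨g, rfl⟩
  rw [hg]
  by_contra hne'
  set u := t g with hu
  -- every out-edge of `u` in `F` is used in `w`
  have hall : F.filter (fun e => s e = u) ⊆ w.toFinset.filter (fun e => s e = u) := by
    intro e he
    rw [Finset.mem_filter] at he ⊢
    refine ⟨List.mem_toFinset.2 ?_, he.2⟩
    by_contra hew
    exact hmax e he.1 hew (by simp [hg, he.2, ← hu])
  have hsub : w.toFinset.filter (fun e => t e = u) ⊆ F.filter (fun e => t e = u) := by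
    intro e he
    rw [Finset.mem_filter] at he ⊢
    exact ⟨hF e (List.mem_toFinset.1 he.1), he.2⟩
  obtain ⟨f, hf, hsf⟩ : ∃ f, w.head? = some f ∧ s f = v := by
    cases hw : w.head? with
    | none => rw [hw] at hh; simp at hh
    | some f => rw [hw] at hh; exact ⟨f, rfl, by simpa using hh⟩
  have hcount := trail_count s t u w hc f g hf hg
  have h1 : w.countP (fun e => decide (s e = u)) = (w.toFinset.filter (fun e => s e = u)).card := by
    rw [count_eq_card_filter hnd]; congr 1; apply Finset.filter_congr; intros; simp
  have h2 : w.countP (fun e => decide (t e = u)) = (w.toFinset.filter (fun e => t e = u)).card := by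
    rw [count_eq_card_filter hnd]; congr 1; apply Finset.filter_congr; intros; simp
  have hsfu : s f ≠ u := by rw [hsf]; exact fun h => hne' (by simp [h, hu])
  rw [if_neg hsfu, if_pos rfl] at hcount
  have c1 := Finset.card_le_card hall
  have c2 := Finset.card_le_card hsub
  have := hbal u
  omega

/-- Extend a trail within a balanced edge set to a closed trail. -/
theorem extend_trail {F : Finset E}
    (hbal : ∀ v : V, (F.filter fun e => s e = v).card = (F.filter fun e => t e = v).card) :
    ∀ (n : ℕ) (w : List E) (v : V), w ≠ [] →
    w.Chain' (fun a b => t a = s b) → w.Nodup → (∀ e ∈ w, e ∈ F) →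
    w.head?.map s = some v → F.card - w.length ≤ n →
    ∃ c : List E, c ≠ [] ∧ c.Chain' (fun a b => t a = s b) ∧ c.Nodup ∧ (∀ e ∈ c, e ∈ F) ∧
      c.head?.map s = some v ∧ c.getLast?.map t = some v := by
  intro n
  induction n with
  | zero =>
    intro w v hne hc hnd hF hh hlen
    refine ⟨w, hne, hc, hnd, hF, hh, ?_⟩
    refine max_trail_closed hbal hne hc hnd hF hh ?_
    intro e heF hew _
    have : (e :: w).Nodup := List.nodup_cons.2 ⟨hew, hnd⟩
    have hsub : (e :: w).toFinset ⊆ F := by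
      intro x hx
      rcases List.mem_cons.1 (List.mem_toFinset.1 hx) with h | h
      · rw [h]; exact heF
      · exact hF x h
    have := Finset.card_le_card hsub
    rw [List.toFinset_card_of_nodup ‹(e :: w).Nodup›] at this
    simp only [List.length_cons] at this
    omega
  | succ n ih =>
    intro w v hne hc hnd hF hh hlen
    by_cases hex : ∃ e ∈ F, e ∉ w ∧ w.getLast?.map t = some (s e)
    · obtain ⟨e, heF, hew, hlast⟩ := hex
      obtain ⟨g, hg, htg⟩ : ∃ g, w.getLast? = some g ∧ t g = s e := by
        cases hw : w.getLast? with
        | none => rw [hw] at hlast; simp at hlast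
        | some g => rw [hw] at hlast; exact ⟨g, rfl, by simpa using hlast⟩
      have hc' : (w ++ [e]).Chain' (fun a b => t a = s b) := by
        unfold List.Chain'; rw [List.isChain_append]
        refine ⟨hc, List.isChain_singleton e, ?_⟩
        intro x hx y hy
        rw [hg, Option.mem_some_iff] at hx
        simp only [List.head?_cons, Option.mem_some_iff] at hy
        rw [← hx, ← hy] at *
        exact htg
      have hnd' : (w ++ [e]).Nodup := by
        rw [List.nodup_append]
        exact ⟨hnd, List.nodup_singleton e, by intro a ha b hb hab; simp at hb; subst hb; subst hab; exact hew ha⟩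
      have hF' : ∀ x ∈ w ++ [e], x ∈ F := by
        intro x hx
        rcases List.mem_append.1 hx with h | h
        · exact hF x h
        · rw [List.mem_singleton.1 h]; exact heF
      have hh' : (w ++ [e]).head?.map s = some v := by
        rw [List.head?_append_of_ne_nil _ hne]; exact hh
      have hlen' : F.card - (w ++ [e]).length ≤ n := by
        have hsub : (w ++ [e]).toFinset ⊆ F := fun x hx => hF' x (List.mem_toFinset.1 hx)
        have := Finset.card_le_card hsub
        rw [List.toFinset_card_of_nodup hnd'] at this
        simp only [List.length_append, List.length_singleton] at this ⊢
        omega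
      exact ih (w ++ [e]) v (by simp) hc' hnd' hF' hh' hlen'
    · push_neg at hex
      exact ⟨w, hne, hc, hnd, hF, hh,
        max_trail_closed hbal hne hc hnd hF hh hex⟩

theorem exists_closed_trail {F : Finset E}
    (hbal : ∀ v : V, (F.filter fun e => s e = v).card = (F.filter fun e => t e = v).card)
    (e0 : E) (he0 : e0 ∈ F) :
    ∃ c : List E, c ≠ [] ∧ c.Chain' (fun a b => t a = s b) ∧ c.Nodup ∧ (∀ e ∈ c, e ∈ F) ∧
      c.head?.map s = some (s e0) ∧ c.getLast?.map t = some (s e0) :=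
  extend_trail hbal F.card [e0] (s e0) (by simp) (List.isChain_singleton e0)
    (List.nodup_singleton e0) (by simpa using he0) (by simp) (by omega)


/-- Rotate a closed trail to start at a given edge. -/
theorem rotate_closed {w : List E} {v : V} (hc : w.Chain' (fun a b => t a = s b))
    (hh : w.head?.map s = some v) (hl : w.getLast?.map t = some v)
    {f : E} (hf : f ∈ w) :
    ∃ w' : List E, w'.Perm w ∧ w' ≠ [] ∧ w'.Chain' (fun a b => t a = s b) ∧
      w'.head? = some f ∧ w'.getLast?.map t = some (s f) := by
  obtain ⟨w1, w2, rfl⟩ := List.append_of_mem hf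
  rcases eq_or_ne w1 [] with rfl | hw1
  · refine ⟨f :: w2, by simp, by simp, by simpa using hc, rfl, ?_⟩
    simp only [List.nil_append] at hh hl
    rw [hl]
    simp only [List.head?_cons, Option.map_some] at hh
    rw [Option.some_inj] at hh ⊢
    rw [hh]
  · unfold List.Chain' at hc; rw [List.isChain_append] at hc
    obtain ⟨hc1, hc2, hlink⟩ := hc
    obtain ⟨g1, hg1⟩ : ∃ g1, w1.getLast? = some g1 := by
      cases hw : w1.getLast? with
      | none => exact absurd (List.getLast?_eq_none_iff.1 hw) hw1
      | some g1 => exact ⟨g1, rfl⟩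
    have hlink' : t g1 = s f := hlink g1 (by rw [hg1]; rfl) f (by simp)
    refine ⟨(f :: w2) ++ w1, List.perm_append_comm, by simp, ?_, ?_, ?_⟩
    · unfold List.Chain'; rw [List.isChain_append]
      refine ⟨hc2, hc1, ?_⟩
      intro x hx y hy
      -- x is the last edge of f :: w2, which is the last of the whole trail
      have hx' : (w1 ++ f :: w2).getLast? = some x := by
        rw [List.getLast?_append_cons]
        exact hx
      have htx : t x = v := by
        rw [hx'] at hl; simpa using hl
      have hsy : s y = v := by
        have : (w1 ++ f :: w2).head? = some y := by
          rw [List.head?_append_of_ne_nil _ hw1]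
          exact hy
        rw [this] at hh; simpa using hh
      rw [htx, hsy]
    · rw [List.head?_append_of_ne_nil _ (by simp)]; rfl
    · rw [List.getLast?_append_of_ne_nil _ hw1, hg1]
      simp [hlink']

/-- In a closed trail, the target of any edge is the source of some edge of the trail. -/
theorem target_mem_sources {w : List E} {v : V} (hc : w.Chain' (fun a b => t a = s b))
    (hh : w.head?.map s = some v) (hl : w.getLast?.map t = some v)
    {f : E} (hf : f ∈ w) : ∃ f' ∈ w, s f' = t f := by
  obtain ⟨w1, w2, hw⟩ := List.append_of_mem hf
  rcases w2 with _ | ⟨x, w2'⟩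
  · -- f is the last edge; t f = v = s (head)
    have hlast : w.getLast? = some f := by rw [hw, List.getLast?_append_cons]; rfl
    obtain ⟨f', hf', hsf'⟩ : ∃ f', w.head? = some f' ∧ s f' = v := by
      cases hwh : w.head? with
      | none => rw [hwh] at hh; simp at hh
      | some f' => rw [hwh] at hh; exact ⟨f', rfl, by simpa using hh⟩
    have htf : t f = v := by rw [hlast] at hl; simpa using hl
    exact ⟨f', List.mem_of_mem_head? (by rw [hf']; rfl), by rw [hsf', htf]⟩
  · refine ⟨x, ?_, ?_⟩
    · rw [hw]; exact List.mem_append.2 (Or.inr (by simp))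
    · unfold List.Chain' at hc; rw [hw, List.isChain_append] at hc
      have := List.isChain_cons_cons.1 hc.2.1
      exact this.1.symm

/-- From a vertex of a closed trail, following reachability either stays on the trail's
vertices or finds an unused edge leaving a trail vertex. -/
theorem reach_unused {w : List E} {v : V} (hc : w.Chain' (fun a b => t a = s b))
    (hh : w.head?.map s = some v) (hl : w.getLast?.map t = some v)
    {x y : V} (hr : Relation.ReflTransGen (fun a b => ∃ e : E, s e = a ∧ t e = b) x y)
    (hx : ∃ f ∈ w, s f = x) :
    (∃ f ∈ w, s f = y) ∨ (∃ g : E, g ∉ w ∧ ∃ f ∈ w, s f = s g) := by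
  induction hr using Relation.ReflTransGen.head_induction_on with
  | refl => exact Or.inl hx
  | head hab _ ih =>
    obtain ⟨e, hse, hte⟩ := hab
    by_cases hew : e ∈ w
    · refine ih ?_
      obtain ⟨f', hf', hsf'⟩ := target_mem_sources hc hh hl hew
      exact ⟨f', hf', by rw [hsf', hte]⟩
    · obtain ⟨f, hfw, hsf⟩ := hx
      exact Or.inr ⟨e, hew, f, hfw, by rw [hsf, hse]⟩

theorem euler_step
    (hbal : ∀ v : V, ((univ : Finset E).filter fun e => s e = v).card
      = ((univ : Finset E).filter fun e => t e = v).card)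
    (hconn : ∀ u v : V, Relation.ReflTransGen (fun a b => ∃ e : E, s e = a ∧ t e = b) u v) :
    ∀ (n : ℕ) (w : List E) (v : V), w ≠ [] → w.Chain' (fun a b => t a = s b) → w.Nodup →
    w.head?.map s = some v → w.getLast?.map t = some v →
    Fintype.card E - w.length ≤ n →
    ∃ w' : List E, w' ≠ [] ∧ w'.Chain' (fun a b => t a = s b) ∧ w'.Nodup ∧
      (w'.getLast?.map t = w'.head?.map s) ∧ ∀ e : E, e ∈ w' := by
  intro n
  induction n with
  | zero =>
    intro w v hne hc hnd hh hl hlen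
    refine ⟨w, hne, hc, hnd, by rw [hh, hl], ?_⟩
    -- w has length ≥ card E and is nodup, so it contains everything
    have h1 : w.toFinset.card = w.length := List.toFinset_card_of_nodup hnd
    have h2 : w.length ≤ Fintype.card E := hnd.length_le_card
    have h3 : w.toFinset = univ := by
      apply Finset.eq_univ_of_card
      rw [h1]
      omega
    intro e
    rw [← List.mem_toFinset, h3]
    exact Finset.mem_univ e
  | succ n ih =>
    intro w v hne hc hnd hh hl hlen
    by_cases hall : ∀ e : E, e ∈ w
    · exact ⟨w, hne, hc, hnd, by rw [hh, hl], hall⟩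
    · push_neg at hall
      obtain ⟨e, hew⟩ := hall
      obtain ⟨f0, hf0, hsf0⟩ : ∃ f0, w.head? = some f0 ∧ s f0 = v := by
        cases hwh : w.head? with
        | none => rw [hwh] at hh; simp at hh
        | some f0 => rw [hwh] at hh; exact ⟨f0, rfl, by simpa using hh⟩
      have hreach := reach_unused hc hh hl (hconn v (s e))
        ⟨f0, List.mem_of_mem_head? (by rw [hf0]; rfl), hsf0⟩
      have hkey : ∃ g : E, g ∉ w ∧ ∃ f ∈ w, s f = s g := by
        rcases hreach with ⟨f, hfw, hsf⟩ | h
        · exact ⟨e, hew, f, hfw, hsf.symm ▸ rfl⟩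
        · exact h
      obtain ⟨g, hgw, f, hfw, hsfg⟩ := hkey
      -- the unused edges
      set F : Finset E := univ \ w.toFinset with hF
      have hcnt := closed_count s t hc hh hl
      have hbalF : ∀ u : V, (F.filter fun e => s e = u).card
          = (F.filter fun e => t e = u).card := by
        intro u
        have hs1 : F.filter (fun e => s e = u)
            = (univ.filter fun e => s e = u) \ (w.toFinset.filter fun e => s e = u) := by
          ext x; simp [hF]; tauto
        have ht1 : F.filter (fun e => t e = u)
            = (univ.filter fun e => t e = u) \ (w.toFinset.filter fun e => t e = u) := by
          ext x; simp [hF]; tauto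
        have hs2 : (w.toFinset.filter fun e => s e = u) ⊆ (univ.filter fun e => s e = u) := by
          intro x hx; rw [Finset.mem_filter] at hx ⊢; exact ⟨Finset.mem_univ x, hx.2⟩
        have ht2 : (w.toFinset.filter fun e => t e = u) ⊆ (univ.filter fun e => t e = u) := by
          intro x hx; rw [Finset.mem_filter] at hx ⊢; exact ⟨Finset.mem_univ x, hx.2⟩
        rw [hs1, ht1, Finset.card_sdiff_of_subset hs2, Finset.card_sdiff_of_subset ht2]
        have e1 : (w.toFinset.filter fun e => s e = u).card
            = w.countP (fun e => decide (s e = u)) := by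
          rw [count_eq_card_filter hnd]; congr 1; apply Finset.filter_congr; intros; simp
        have e2 : (w.toFinset.filter fun e => t e = u).card
            = w.countP (fun e => decide (t e = u)) := by
          rw [count_eq_card_filter hnd]; congr 1; apply Finset.filter_congr; intros; simp
        rw [e1, e2, hbal u, hcnt u]
      have hgF : g ∈ F := by
        rw [hF, Finset.mem_sdiff]
        exact ⟨Finset.mem_univ g, fun h => hgw (List.mem_toFinset.1 h)⟩
      -- extract a closed trail at `s g` inside `F`
      obtain ⟨c, hcne, hcc, hcnd, hcF, hch, hcl⟩ := exists_closed_trail hbalF g hgF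
      -- rotate `w` to start at `f` (where `s f = s g`)
      obtain ⟨w', hperm, hwne', hc', hh', hl'⟩ := rotate_closed hc hh hl hfw
      -- splice
      have hdisj : ∀ x ∈ c, x ∉ w' := by
        intro x hx hxw
        have := hcF x hx
        rw [hF, Finset.mem_sdiff] at this
        exact this.2 (List.mem_toFinset.2 (hperm.mem_iff.1 hxw))
      have hcw : (c ++ w').Chain' (fun a b => t a = s b) := by
        unfold List.Chain'; rw [List.isChain_append]
        refine ⟨hcc, hc', ?_⟩
        intro x hx y hy
        have htx : t x = s g := by
          rw [Option.mem_def] at hx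
          rw [hx] at hcl; simpa using hcl
        have hsy : s y = s f := by
          rw [Option.mem_def] at hy
          rw [hy] at hh'
          simp at hh'
          rw [hh']
        rw [htx, hsy, hsfg]
      have hndcw : (c ++ w').Nodup := by
        rw [List.nodup_append]
        exact ⟨hcnd, hperm.nodup_iff.2 hnd, fun x hx y hy hxy => hdisj x hx (by rw [hxy]; exact hy)⟩
      have hhcw : (c ++ w').head?.map s = some (s g) := by
        rw [List.head?_append_of_ne_nil _ hcne]; exact hch
      have hlcw : (c ++ w').getLast?.map t = some (s g) := by
        rw [List.getLast?_append_of_ne_nil _ hwne', hl', hsfg]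
      have hlencw : Fintype.card E - (c ++ w').length ≤ n := by
        have hlc : 1 ≤ c.length := by
          cases c with
          | nil => exact absurd rfl hcne
          | cons a l => simp
        have hlw : w'.length = w.length := hperm.length_eq
        rw [List.length_append]
        omega
      exact ih (c ++ w') (s g) (by simp [hcne]) hcw hndcw hhcw hlcw hlencw

theorem abstract_euler [Nonempty E]
    (hbal : ∀ v : V, ((univ : Finset E).filter fun e => s e = v).card
      = ((univ : Finset E).filter fun e => t e = v).card)
    (hconn : ∀ u v : V, Relation.ReflTransGen (fun a b => ∃ e : E, s e = a ∧ t e = b) u v) :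
    ∃ w : List E, w ≠ [] ∧ w.Chain' (fun a b => t a = s b) ∧ w.Nodup ∧
      (w.getLast?.map t = w.head?.map s) ∧ ∀ e : E, e ∈ w := by
  obtain ⟨e0⟩ := ‹Nonempty E›
  obtain ⟨c, hcne, hcc, hcnd, _, hch, hcl⟩ :=
    exists_closed_trail (F := univ) (by simpa using hbal) e0 (Finset.mem_univ e0)
  obtain ⟨w, h1, h2, h3, h4, h5⟩ :=
    euler_step hbal hconn (Fintype.card E) c (s e0) hcne hcc hcnd hch hcl (by omega)
  exact ⟨w, h1, h2, h3, h4, h5⟩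


theorem sort_unique {j : ℕ} {f : Fin j → ℕ} (hf : Function.Injective f)
    {σ : Equiv.Perm (Fin j)} (h : Monotone (f ∘ σ)) : σ = Tuple.sort f := by
  rw [Tuple.eq_sort_iff]
  exact ⟨h, fun i j hij hfe => absurd (σ.injective (hf hfe)) hij.ne⟩

theorem patOf_le_iff {j : ℕ} {f : Fin j → ℕ} (hf : Function.Injective f) (a b : Fin j) :
    patOf f a ≤ patOf f b ↔ f a ≤ f b := by
  have hsm : StrictMono (f ∘ Tuple.sort f) :=
    (Tuple.monotone_sort f).strictMono_of_injective (hf.comp (Equiv.injective _))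
  have h1 : ∀ x, (f ∘ Tuple.sort f) (patOf f x) = f x := by
    intro x; simp [patOf, Function.comp]
  rw [← hsm.le_iff_le, h1, h1]

theorem patOf_congr {j : ℕ} {f g : Fin j → ℕ} (hf : Function.Injective f)
    (hg : Function.Injective g) (h : ∀ a b, f a ≤ f b ↔ g a ≤ g b) : patOf f = patOf g := by
  have : Tuple.sort f = Tuple.sort g := by
    refine (sort_unique hf ?_).symm
    intro a b hab
    exact (h _ _).2 (Tuple.monotone_sort g hab)
  simp [patOf, this]

theorem patOf_perm {j : ℕ} (u : Equiv.Perm (Fin j)) : patOf (fun i => (u i : ℕ)) = u := by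
  have hinj : Function.Injective (fun i => (u i : ℕ)) := fun a b hab =>
    u.injective (Fin.val_injective hab)
  have : u⁻¹ = Tuple.sort (fun i => (u i : ℕ)) := by
    refine sort_unique hinj ?_
    intro a b hab
    simpa [Function.comp] using hab
  simp [patOf, ← this]

theorem firstPat_patOf {k : ℕ} {g : Fin (k + 1) → ℕ} (hg : Function.Injective g) :
    firstPat (patOf g) = patOf (fun i => g i.castSucc) := by
  have hcs : Function.Injective (Fin.castSucc : Fin k → Fin (k + 1)) := Fin.castSucc_injective k
  refine patOf_congr (fun a b hab => ?_) (fun a b hab => hcs (hg hab)) (fun a b => ?_)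
  · exact hcs ((patOf g).injective (Fin.val_injective hab))
  · rw [← Fin.le_def]
    exact patOf_le_iff hg _ _

theorem lastPat_patOf {k : ℕ} {g : Fin (k + 1) → ℕ} (hg : Function.Injective g) :
    lastPat (patOf g) = patOf (fun i => g i.succ) := by
  have hcs : Function.Injective (Fin.succ : Fin k → Fin (k + 1)) := Fin.succ_injective k
  refine patOf_congr (fun a b hab => ?_) (fun a b hab => hcs (hg hab)) (fun a b => ?_)
  · exact hcs ((patOf g).injective (Fin.val_injective hab))
  · rw [← Fin.le_def]
    exact patOf_le_iff hg _ _

theorem firstPat_mul_rotate {k : ℕ} (π : Equiv.Perm (Fin (k + 1))) :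
    firstPat (π * (finRotate (k + 1) : Equiv.Perm (Fin (k+1)))) = lastPat π := by
  unfold firstPat lastPat
  congr 1
  funext i
  simp [finRotate_succ_apply, Fin.coeSucc_eq_succ]

theorem overlap_balance (k : ℕ) (v : Equiv.Perm (Fin k)) :
    ((Finset.univ : Finset (Equiv.Perm (Fin (k+1)))).filter fun π => firstPat π = v).card
      = ((Finset.univ : Finset (Equiv.Perm (Fin (k+1)))).filter fun π => lastPat π = v).card := by
  apply Finset.card_bij (fun π _ => π * (finRotate (k+1))⁻¹)
  · intro π hπ
    rw [Finset.mem_filter] at hπ ⊢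
    refine ⟨Finset.mem_univ _, ?_⟩
    have := firstPat_mul_rotate (π * (finRotate (k+1))⁻¹)
    rw [inv_mul_cancel_right] at this
    rw [← this]
    exact hπ.2
  · intro a ha b hb hab
    exact mul_right_cancel hab
  · intro σ hσ
    rw [Finset.mem_filter] at hσ
    refine ⟨σ * (finRotate (k+1)), ?_, by group⟩
    rw [Finset.mem_filter]
    exact ⟨Finset.mem_univ _, by rw [firstPat_mul_rotate]; exact hσ.2⟩

/-- The word realizing `u` followed by (a shifted copy of) `v`. -/
def wordUV {k : ℕ} (u v : Equiv.Perm (Fin k)) : ℕ → ℕ := fun n =>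
  if h : n < k then (u ⟨n, h⟩ : ℕ)
  else if h2 : n - k < k then ((v ⟨n - k, h2⟩ : ℕ) + k) else n

theorem wordUV_inj {k : ℕ} (u v : Equiv.Perm (Fin k)) {a b : ℕ}
    (ha : a < 2 * k) (hb : b < 2 * k) (h : wordUV u v a = wordUV u v b) : a = b := by
  unfold wordUV at h
  rcases Nat.lt_or_ge a k with h1 | h1 <;> rcases Nat.lt_or_ge b k with h2 | h2
  · rw [dif_pos h1, dif_pos h2] at h
    simpa using congrArg Fin.val (u.injective (Fin.val_injective h))
  · rw [dif_pos h1] at h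
    rw [dif_neg (show ¬ b < k by omega)] at h
    rw [dif_pos (show b - k < k by omega)] at h
    have := (u ⟨a, h1⟩).is_lt
    omega
  · rw [dif_neg (show ¬ a < k by omega)] at h
    rw [dif_pos (show a - k < k by omega)] at h
    rw [dif_pos h2] at h
    have := (u ⟨b, h2⟩).is_lt
    omega
  · rw [dif_neg (show ¬ a < k by omega)] at h
    rw [dif_pos (show a - k < k by omega)] at h
    rw [dif_neg (show ¬ b < k by omega)] at h
    rw [dif_pos (show b - k < k by omega)] at h
    have h' : (v ⟨a - k, by omega⟩ : ℕ) = (v ⟨b - k, by omega⟩ : ℕ) := by omega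
    have := congrArg Fin.val (v.injective (Fin.val_injective h'))
    simp only at this
    omega

theorem wordUV_zero {k : ℕ} (u v : Equiv.Perm (Fin k)) :
    patOf (fun i : Fin k => wordUV u v (0 + (i : ℕ))) = u := by
  have h : (fun i : Fin k => wordUV u v (0 + (i : ℕ))) = fun i => (u i : ℕ) := by
    funext i
    rw [Nat.zero_add]
    unfold wordUV
    rw [dif_pos i.is_lt]
  rw [h, patOf_perm]

theorem wordUV_last {k : ℕ} (u v : Equiv.Perm (Fin k)) :
    patOf (fun i : Fin k => wordUV u v (k + (i : ℕ))) = v := by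
  have h : (fun i : Fin k => wordUV u v (k + (i : ℕ))) = fun i => (v i : ℕ) + k := by
    funext i
    unfold wordUV
    rw [dif_neg (by omega), dif_pos (by simp)]
    congr
    · omega
  rw [h]
  have hinj1 : Function.Injective (fun i : Fin k => (v i : ℕ) + k) := by
    intro a b hab
    simp only [add_left_inj] at hab
    exact v.injective (Fin.val_injective hab)
  have hinj2 : Function.Injective (fun i : Fin k => (v i : ℕ)) := fun a b hab =>
    v.injective (Fin.val_injective hab)
  rw [patOf_congr hinj1 hinj2 (fun a b => by simp), patOf_perm]

theorem wordUV_step {k : ℕ} (u v : Equiv.Perm (Fin k)) {j : ℕ} (hj : j < k) :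
    firstPat (patOf (fun i : Fin (k+1) => wordUV u v (j + (i : ℕ))))
        = patOf (fun i : Fin k => wordUV u v (j + (i : ℕ)))
    ∧ lastPat (patOf (fun i : Fin (k+1) => wordUV u v (j + (i : ℕ))))
        = patOf (fun i : Fin k => wordUV u v (j + 1 + (i : ℕ))) := by
  have hginj : Function.Injective (fun i : Fin (k+1) => wordUV u v (j + (i : ℕ))) := by
    intro a b hab
    have ha := a.is_lt
    have hb := b.is_lt
    have := wordUV_inj u v (a := j + (a : ℕ)) (b := j + (b : ℕ)) (by omega) (by omega) hab
    exact Fin.val_injective (by omega)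
  constructor
  · rw [firstPat_patOf hginj]
    rfl
  · rw [lastPat_patOf hginj]
    congr 1
    funext i
    congr 1
    simp only [Fin.val_succ]
    omega

theorem overlap_conn {k : ℕ} (u v : Equiv.Perm (Fin k)) :
    Relation.ReflTransGen
      (fun a b => ∃ π : Equiv.Perm (Fin (k+1)), firstPat π = a ∧ lastPat π = b) u v := by
  suffices h : ∀ j, j ≤ k → Relation.ReflTransGen
      (fun a b => ∃ π : Equiv.Perm (Fin (k+1)), firstPat π = a ∧ lastPat π = b)
      u (patOf (fun i : Fin k => wordUV u v (j + (i : ℕ)))) by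
    have := h k le_rfl
    rwa [wordUV_last] at this
  intro j
  induction j with
  | zero =>
    intro _
    rw [wordUV_zero]
  | succ j ih =>
    intro hjk
    have hj : j < k := by omega
    exact (ih (by omega)).tail
      ⟨patOf (fun i : Fin (k+1) => wordUV u v (j + (i : ℕ))),
        (wordUV_step u v hj).1, (wordUV_step u v hj).2⟩

/-- The overlap graph `Ov(k+1)` has an Eulerian circuit: a nonempty closed directed walk
(a list of edges, i.e. of permutations in `S_{k+1}`, with the target vertex of each edge
equal to the source vertex of the next, and the target of the last equal to the source of
the first) using every edge exactly once. -/
theorem overlapGraph_eulerian (k : ℕ) :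
    ∃ w : List (Equiv.Perm (Fin (k + 1))),
      w ≠ [] ∧
      w.Chain' (fun a b => lastPat a = firstPat b) ∧
      (w.getLast?.map lastPat) = (w.head?.map firstPat) ∧
      w.Nodup ∧
      ∀ π : Equiv.Perm (Fin (k + 1)), π ∈ w := by
  obtain ⟨w, h1, h2, h3, h4, h5⟩ :=
    abstract_euler (s := firstPat (k := k)) (t := lastPat) (overlap_balance k) overlap_conn
  exact ⟨w, h1, h2, h4, h3, h5⟩

end AbstractEuler
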